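/- Let n ∈ ℕ, r ∈ ℕ with r ≥ 1, and let f₁,…,f_r and g₁,…,g_r be real-valued functions on ℝ, each n times differentiable. Suppose Σ_{i=1}^r g_i = 0 (identically). Then for every multi-index s = (s₁,…,s_r) of nonnegative integers with s₁+⋯+s_r = n, one has Σ_{k₁+⋯+k_r = n} (n! / (k₁!⋯k_r!)) · Π_{i=1}^r (f_i · g_i^{k_i})^{(s_i)} = n! · (Π_{i=1}^r f_i) · Π_{i=1}^r (g_i')^{s_i}, where the sum ranges over all r-tuples of nonnegative integers k = (k₁,…,k_r) with |k| = n and h^{(m)} denotes the m-th derivative of h. -/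

import Mathlib

open scoped BigOperators
open Finset Nat

private lemma iterDeriv_add' {n : ℕ} {f g : ℝ → ℝ} (hf : ContDiff ℝ (n:ℕ∞) f)
    (hg : ContDiff ℝ (n:ℕ∞) g) (x : ℝ) :
    iteratedDeriv n (fun t => f t + g t) x =
      iteratedDeriv n f x + iteratedDeriv n g x := by
  have := iteratedDerivWithin_add (Set.mem_univ x) uniqueDiffOn_univ
    (hf.contDiffOn (s := Set.univ) x (Set.mem_univ x)) (hg.contDiffOn (s := Set.univ) x (Set.mem_univ x))
  simpa [iteratedDerivWithin_univ, Pi.add_def] using this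

private lemma iterDeriv_const_mul' {n : ℕ} (c : ℝ) {f : ℝ → ℝ} (hf : ContDiff ℝ (n:ℕ∞) f)
    (x : ℝ) : iteratedDeriv n (fun t => c * f t) x = c * iteratedDeriv n f x := by
  have := iteratedDerivWithin_const_mul (Set.mem_univ x) uniqueDiffOn_univ c
    (hf.contDiffOn (s := Set.univ) x (Set.mem_univ x))
  simpa [iteratedDerivWithin_univ] using this

private lemma mult_succ (r : ℕ) (k : Fin r → ℕ) (a : Fin r) :
    (k a + 1) * Nat.multinomial univ (Function.update k a (k a + 1)) =
      ((∑ i, k i) + 1) * Nat.multinomial univ k := by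
  have hP : 0 < ∏ i, (k i)! := prod_pos fun i _ => factorial_pos _
  refine Nat.eq_of_mul_eq_mul_left hP ?_
  have e1 : ∏ i ∈ univ.erase a, (Function.update k a (k a + 1) i)!
      = ∏ i ∈ univ.erase a, (k i)! :=
    Finset.prod_congr rfl fun i hi => by
      rw [Function.update_of_ne (Finset.ne_of_mem_erase hi)]
  have e2 : ∑ i ∈ univ.erase a, Function.update k a (k a + 1) i
      = ∑ i ∈ univ.erase a, k i :=
    Finset.sum_congr rfl fun i hi => by
      rw [Function.update_of_ne (Finset.ne_of_mem_erase hi)]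
  have hprod : ∏ i, (Function.update k a (k a + 1) i)! = (k a + 1) * ∏ i, (k i)! := by
    rw [← Finset.mul_prod_erase univ (fun i => (Function.update k a (k a + 1) i)!) (mem_univ a),
      ← Finset.mul_prod_erase univ (fun i => (k i)!) (mem_univ a), e1,
      Function.update_self, factorial_succ]
    ring
  have hsum : ∑ i, Function.update k a (k a + 1) i = (∑ i, k i) + 1 := by
    rw [← Finset.add_sum_erase univ (Function.update k a (k a + 1)) (mem_univ a),
      ← Finset.add_sum_erase univ k (mem_univ a), e2, Function.update_self]
    ring
  calc (∏ i, (k i)!) * ((k a + 1) * Nat.multinomial univ (Function.update k a (k a + 1)))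
      = (∏ i, (Function.update k a (k a + 1) i)!) *
          Nat.multinomial univ (Function.update k a (k a + 1)) := by rw [hprod]; ring
    _ = (∑ i, Function.update k a (k a + 1) i)! := Nat.multinomial_spec _ _
    _ = ((∑ i, k i) + 1)! := by rw [hsum]
    _ = ((∑ i, k i) + 1) * (∑ i, k i)! := by rw [factorial_succ]
    _ = ((∑ i, k i) + 1) * ((∏ i, (k i)!) * Nat.multinomial univ k) := by
        rw [Nat.multinomial_spec]
    _ = (∏ i, (k i)!) * (((∑ i, k i) + 1) * Nat.multinomial univ k) := by ring

private theorem key (m : ℕ) : ∀ (n : ℕ), m ≤ n → ∀ (r : ℕ) (f g : Fin r → ℝ → ℝ),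
    (∀ i, ContDiff ℝ (m:ℕ∞) (f i)) → (∀ i, ContDiff ℝ (m:ℕ∞) (g i)) →
    (∀ x : ℝ, ∑ i, g i x = 0) → ∀ (s : Fin r → ℕ), (∑ i, s i = m) → ∀ (x : ℝ),
    ∑ k ∈ Finset.Nat.antidiagonalTuple r n,
      (Nat.multinomial Finset.univ k : ℝ) *
        ∏ i, iteratedDeriv (s i) (fun t => f i t * (g i t) ^ (k i)) x
      = if m = n then (n.factorial : ℝ) * (∏ i, f i x) * ∏ i, (deriv (g i) x) ^ (s i)
        else 0 := by
  induction m with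
  | zero =>
    intro n hmn r f g hf hg hsum s hs x
    have hs0 : ∀ i, s i = 0 := fun i =>
      (Finset.sum_eq_zero_iff.mp hs) i (mem_univ i)
    have hterm : ∀ k : Fin r → ℕ,
        (∏ i, iteratedDeriv (s i) (fun t => f i t * g i t ^ k i) x)
          = (∏ i, f i x) * ∏ i, g i x ^ k i := by
      intro k
      rw [← Finset.prod_mul_distrib]
      exact Finset.prod_congr rfl fun i _ => by rw [hs0 i, iteratedDeriv_zero]
    have hmt : ((∑ i, g i x) : ℝ)^n = ∑ k ∈ Finset.Nat.antidiagonalTuple r n,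
        (Nat.multinomial univ k : ℝ) * ∏ i, g i x ^ k i := by
      rw [← Finset.piAntidiag_univ_fin_eq_antidiagonalTuple n r]
      exact Finset.sum_pow_eq_sum_piAntidiag univ (fun i => g i x) n
    have hone : ∏ i, (deriv (g i) x) ^ (s i) = 1 :=
      Finset.prod_eq_one fun i _ => by rw [hs0 i, pow_zero]
    calc ∑ k ∈ Finset.Nat.antidiagonalTuple r n,
          (Nat.multinomial univ k : ℝ) *
            ∏ i, iteratedDeriv (s i) (fun t => f i t * g i t ^ k i) x
        = ∑ k ∈ Finset.Nat.antidiagonalTuple r n,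
            (∏ i, f i x) * ((Nat.multinomial univ k : ℝ) * ∏ i, g i x ^ k i) := by
          refine Finset.sum_congr rfl fun k _ => ?_; rw [hterm k]; ring
      _ = (∏ i, f i x) * ((∑ i, g i x) : ℝ)^n := by rw [← Finset.mul_sum, hmt]
      _ = (∏ i, f i x) * (0:ℝ)^n := by rw [hsum x]
      _ = if 0 = n then ((n.factorial : ℝ)) * (∏ i, f i x) * ∏ i, (deriv (g i) x) ^ (s i)
            else 0 := by
          cases n with
          | zero => simp [hone]
          | succ n => simp [Nat.succ_ne_zero]
  | succ m IH =>
    intro n hmn r f g hf hg hsum s hs x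
    obtain ⟨n', rfl⟩ : ∃ n', n = n' + 1 := ⟨n - 1, by omega⟩
    have hs_ne : ∑ i, s i ≠ 0 := by omega
    obtain ⟨a, -, ha⟩ := Finset.exists_ne_zero_of_sum_ne_zero hs_ne
    have hcast : ((((m+1:ℕ)):ℕ∞) : WithTop ℕ∞) = ((m:ℕ∞) : WithTop ℕ∞) + 1 := by norm_cast
    have hfd : ∀ i, Differentiable ℝ (f i) := fun i =>
      (hf i).differentiable (by simp)
    have hgd : ∀ i, Differentiable ℝ (g i) := fun i =>
      (hg i).differentiable (by simp)
    have hf' : ContDiff ℝ (m:ℕ∞) (deriv (f a)) := by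
      have h := hf a; rw [hcast] at h; exact (contDiff_succ_iff_deriv.mp h).2.2
    have hg' : ContDiff ℝ (m:ℕ∞) (deriv (g a)) := by
      have h := hg a; rw [hcast] at h; exact (contDiff_succ_iff_deriv.mp h).2.2
    have hfm : ∀ i, ContDiff ℝ (m:ℕ∞) (f i) := fun i =>
      (hf i).of_le (by exact_mod_cast Nat.le_succ m)
    have hgm : ∀ i, ContDiff ℝ (m:ℕ∞) (g i) := fun i =>
      (hg i).of_le (by exact_mod_cast Nat.le_succ m)
    set F1 : Fin r → ℝ → ℝ := Function.update f a (deriv (f a)) with hF1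
    set F2 : Fin r → ℝ → ℝ := Function.update f a (fun t => f a t * deriv (g a) t) with hF2
    set s' : Fin r → ℕ := Function.update s a (s a - 1) with hs'def
    have hF1c : ∀ i, ContDiff ℝ (m:ℕ∞) (F1 i) := fun i => by
      rcases eq_or_ne i a with rfl | h
      · rw [hF1, Function.update_self]; exact hf'
      · rw [hF1, Function.update_of_ne h]; exact hfm i
    have hF2c : ∀ i, ContDiff ℝ (m:ℕ∞) (F2 i) := fun i => by
      rcases eq_or_ne i a with rfl | h
      · rw [hF2, Function.update_self]; exact (hfm i).mul hg'
      · rw [hF2, Function.update_of_ne h]; exact hfm i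
    have sum_split : ∀ k : Fin r → ℕ, ∑ i, k i = k a + ∑ i ∈ univ.erase a, k i :=
      fun k => (Finset.add_sum_erase univ k (mem_univ a)).symm
    have sum_update : ∀ (k : Fin r → ℕ) (b : ℕ),
        ∑ i, Function.update k a b i = b + ∑ i ∈ univ.erase a, k i := by
      intro k b
      rw [← Finset.add_sum_erase univ _ (mem_univ a), Function.update_self]
      congr 1
      exact Finset.sum_congr rfl fun i hi => by
        rw [Function.update_of_ne (Finset.ne_of_mem_erase hi)]
    have hs'sum : ∑ i, s' i = m := by
      have h1 := sum_split s
      have h2 := sum_update s (s a - 1)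
      rw [← hs'def] at h2
      omega
    have hsa : s a - 1 ≤ m := by have := sum_split s; omega
    -- per-term splitting
    have hsplit : ∀ k : Fin r → ℕ,
        ∏ i, iteratedDeriv (s i) (fun t => f i t * g i t ^ k i) x
        = (∏ i, iteratedDeriv (s' i) (fun t => F1 i t * g i t ^ k i) x)
          + (k a : ℝ) * ∏ i, iteratedDeriv (s' i)
              (fun t => F2 i t * g i t ^ (k i - if i = a then 1 else 0)) x := by
      intro k
      rw [← Finset.mul_prod_erase univ
          (fun i => iteratedDeriv (s i) (fun t => f i t * g i t ^ k i) x) (mem_univ a),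
        ← Finset.mul_prod_erase univ
          (fun i => iteratedDeriv (s' i) (fun t => F1 i t * g i t ^ k i) x) (mem_univ a),
        ← Finset.mul_prod_erase univ
          (fun i => iteratedDeriv (s' i)
            (fun t => F2 i t * g i t ^ (k i - if i = a then 1 else 0)) x) (mem_univ a)]
      have e1 : ∏ i ∈ univ.erase a, iteratedDeriv (s' i) (fun t => F1 i t * g i t ^ k i) x
          = ∏ i ∈ univ.erase a, iteratedDeriv (s i) (fun t => f i t * g i t ^ k i) x :=
        Finset.prod_congr rfl fun i hi => by
          rw [hs'def, hF1, Function.update_of_ne (Finset.ne_of_mem_erase hi),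
            Function.update_of_ne (Finset.ne_of_mem_erase hi)]
      have e2 : ∏ i ∈ univ.erase a, iteratedDeriv (s' i)
            (fun t => F2 i t * g i t ^ (k i - if i = a then 1 else 0)) x
          = ∏ i ∈ univ.erase a, iteratedDeriv (s i) (fun t => f i t * g i t ^ k i) x :=
        Finset.prod_congr rfl fun i hi => by
          rw [hs'def, hF2, Function.update_of_ne (Finset.ne_of_mem_erase hi),
            Function.update_of_ne (Finset.ne_of_mem_erase hi),
            if_neg (Finset.ne_of_mem_erase hi), Nat.sub_zero]
      rw [e1, e2]
      have hfac : iteratedDeriv (s a) (fun t => f a t * g a t ^ k a) x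
          = iteratedDeriv (s' a) (fun t => F1 a t * g a t ^ k a) x
            + (k a : ℝ) * iteratedDeriv (s' a)
                (fun t => F2 a t * g a t ^ (k a - if a = a then 1 else 0)) x := by
        obtain ⟨p, hp⟩ : ∃ p, s a = p + 1 := ⟨s a - 1, by omega⟩
        have hs'a : s' a = p := by rw [hs'def, Function.update_self]; omega
        have hpm : p ≤ m := by omega
        have hpm' : (p : ℕ∞) ≤ (m : ℕ∞) := by exact_mod_cast hpm
        have hder : (deriv fun t => f a t * g a t ^ k a)
            = fun t => deriv (f a) t * g a t ^ k a
                + (k a : ℝ) * (f a t * deriv (g a) t * g a t ^ (k a - 1)) := by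
          funext t
          rw [deriv_fun_mul ((hfd a).differentiableAt) (((hgd a).differentiableAt).fun_pow _),
            deriv_fun_pow ((hgd a).differentiableAt) (k a)]
          ring
        have hc1 : ContDiff ℝ (p:ℕ∞) (fun t => deriv (f a) t * g a t ^ k a) :=
          (hf'.mul ((hgm a).pow _)).of_le (by exact_mod_cast hpm')
        have hc2 : ContDiff ℝ (p:ℕ∞)
            (fun t => f a t * deriv (g a) t * g a t ^ (k a - 1)) :=
          (((hfm a).mul hg').mul ((hgm a).pow _)).of_le (by exact_mod_cast hpm')
        rw [hp, iteratedDeriv_succ', hder, hs'a, if_pos rfl]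
        rw [iterDeriv_add' hc1 (by exact contDiff_const.mul hc2) x,
          iterDeriv_const_mul' (k a : ℝ) hc2 x]
        rw [hF1, hF2, Function.update_self, Function.update_self]
      rw [hfac]
      ring
    -- split the sum
    rw [show ∑ k ∈ Finset.Nat.antidiagonalTuple r (n'+1),
          (Nat.multinomial univ k : ℝ) *
            ∏ i, iteratedDeriv (s i) (fun t => f i t * g i t ^ k i) x
        = (∑ k ∈ Finset.Nat.antidiagonalTuple r (n'+1),
            (Nat.multinomial univ k : ℝ) *
              ∏ i, iteratedDeriv (s' i) (fun t => F1 i t * g i t ^ k i) x)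
          + ∑ k ∈ Finset.Nat.antidiagonalTuple r (n'+1),
              (Nat.multinomial univ k : ℝ) * (k a : ℝ) *
                ∏ i, iteratedDeriv (s' i)
                  (fun t => F2 i t * g i t ^ (k i - if i = a then 1 else 0)) x from by
      rw [← Finset.sum_add_distrib]
      refine Finset.sum_congr rfl fun k _ => ?_
      rw [hsplit k]; ring]
    -- first sum vanishes by IH
    have hzero : (∑ k ∈ Finset.Nat.antidiagonalTuple r (n'+1),
        (Nat.multinomial univ k : ℝ) *
          ∏ i, iteratedDeriv (s' i) (fun t => F1 i t * g i t ^ k i) x) = 0 := by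
      rw [IH (n'+1) (by omega) r F1 g hF1c hgm hsum s' hs'sum x,
        if_neg (by omega : ¬ m = n' + 1)]
    rw [hzero, zero_add]
    -- second sum: reindex
    have hfilter : ∑ k ∈ Finset.Nat.antidiagonalTuple r (n'+1),
          (Nat.multinomial univ k : ℝ) * (k a : ℝ) *
            ∏ i, iteratedDeriv (s' i)
              (fun t => F2 i t * g i t ^ (k i - if i = a then 1 else 0)) x
        = ∑ k ∈ (Finset.Nat.antidiagonalTuple r (n'+1)).filter (fun k => k a ≠ 0),
            (Nat.multinomial univ k : ℝ) * (k a : ℝ) *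
              ∏ i, iteratedDeriv (s' i)
                (fun t => F2 i t * g i t ^ (k i - if i = a then 1 else 0)) x := by
      refine (Finset.sum_filter_of_ne ?_).symm
      intro k _ hne
      by_contra h0
      exact hne (by rw [h0]; simp)
    rw [hfilter]
    have hbij : ∑ k ∈ (Finset.Nat.antidiagonalTuple r (n'+1)).filter (fun k => k a ≠ 0),
          (Nat.multinomial univ k : ℝ) * (k a : ℝ) *
            ∏ i, iteratedDeriv (s' i)
              (fun t => F2 i t * g i t ^ (k i - if i = a then 1 else 0)) x
        = ∑ k ∈ Finset.Nat.antidiagonalTuple r n',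
            ((n' + 1 : ℝ) * (Nat.multinomial univ k : ℝ)) *
              ∏ i, iteratedDeriv (s' i) (fun t => F2 i t * g i t ^ k i) x := by
      refine Finset.sum_bij' (fun k _ => Function.update k a (k a - 1))
        (fun k _ => Function.update k a (k a + 1)) ?_ ?_ ?_ ?_ ?_
      · intro k hk
        rw [Finset.mem_filter, Finset.Nat.mem_antidiagonalTuple] at hk
        rw [Finset.Nat.mem_antidiagonalTuple]
        have h1 := sum_split k
        have h2 := sum_update k (k a - 1)
        have hka : k a ≠ 0 := hk.2
        omega
      · intro k hk
        rw [Finset.Nat.mem_antidiagonalTuple] at hk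
        rw [Finset.mem_filter, Finset.Nat.mem_antidiagonalTuple]
        have h1 := sum_split k
        have h2 := sum_update k (k a + 1)
        refine ⟨by omega, ?_⟩
        show Function.update k a (k a + 1) a ≠ 0
        rw [Function.update_self]
        omega
      · intro k hk
        rw [Finset.mem_filter] at hk
        have hka : k a ≠ 0 := hk.2
        funext i
        rcases eq_or_ne i a with rfl | h
        · simp only [Function.update_self]; omega
        · rw [Function.update_of_ne h, Function.update_of_ne h]
      · intro k _
        funext i
        rcases eq_or_ne i a with rfl | h
        · simp only [Function.update_self]; omega
        · rw [Function.update_of_ne h, Function.update_of_ne h]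
      · intro k hk
        rw [Finset.mem_filter, Finset.Nat.mem_antidiagonalTuple] at hk
        have hka : k a ≠ 0 := hk.2
        set k'' : Fin r → ℕ := Function.update k a (k a - 1) with hk''
        have hup : Function.update k'' a (k'' a + 1) = k := by
          funext i
          rcases eq_or_ne i a with rfl | h
          · simp only [hk'', Function.update_self]; omega
          · rw [Function.update_of_ne h, hk'', Function.update_of_ne h]
        have hsum'' : ∑ i, k'' i = n' := by
          have h1 := sum_split k
          have h2 := sum_update k (k a - 1)
          rw [hk'']
          omega
        have hcoef : Nat.multinomial univ k * (k a)
            = (n' + 1) * Nat.multinomial univ k'' := by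
          have hm := mult_succ r k'' a
          rw [hup, hsum''] at hm
          have hk''a : k'' a + 1 = k a := by
            rw [hk'', Function.update_self]; omega
          rw [mul_comm, ← hk''a]
          exact hm
        have hprodeq : ∏ i, iteratedDeriv (s' i)
              (fun t => F2 i t * g i t ^ (k i - if i = a then 1 else 0)) x
            = ∏ i, iteratedDeriv (s' i) (fun t => F2 i t * g i t ^ (k'' i)) x := by
          refine Finset.prod_congr rfl fun i _ => ?_
          rcases eq_or_ne i a with rfl | h
          · rw [if_pos rfl, hk'', Function.update_self]
          · rw [if_neg h, hk'', Function.update_of_ne h, Nat.sub_zero]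
        rw [hprodeq]
        have hcoefR : (Nat.multinomial univ k : ℝ) * (k a : ℝ)
            = (n' + 1 : ℝ) * (Nat.multinomial univ k'' : ℝ) := by
          exact_mod_cast hcoef
        rw [hcoefR]
    rw [hbij]
    have hIH2 : ∑ k ∈ Finset.Nat.antidiagonalTuple r n',
          (Nat.multinomial univ k : ℝ) *
            ∏ i, iteratedDeriv (s' i) (fun t => F2 i t * g i t ^ k i) x
        = if m = n' then (n'.factorial : ℝ) * (∏ i, F2 i x) * ∏ i, (deriv (g i) x) ^ (s' i)
          else 0 :=
      IH n' (by omega) r F2 g hF2c hgm hsum s' hs'sum x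
    have hfactor : ∑ k ∈ Finset.Nat.antidiagonalTuple r n',
          ((n' + 1 : ℝ) * (Nat.multinomial univ k : ℝ)) *
            ∏ i, iteratedDeriv (s' i) (fun t => F2 i t * g i t ^ k i) x
        = (n' + 1 : ℝ) * ∑ k ∈ Finset.Nat.antidiagonalTuple r n',
            (Nat.multinomial univ k : ℝ) *
              ∏ i, iteratedDeriv (s' i) (fun t => F2 i t * g i t ^ k i) x := by
      rw [Finset.mul_sum]
      exact Finset.sum_congr rfl fun k _ => by ring
    rw [hfactor, hIH2]
    rcases eq_or_ne m n' with rfl | hne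
    · rw [if_pos rfl, if_pos rfl]
      -- assemble
      have hprodF2 : ∏ i, F2 i x = (f a x * deriv (g a) x) * ∏ i ∈ univ.erase a, f i x := by
        rw [← Finset.mul_prod_erase univ (fun i => F2 i x) (mem_univ a), hF2,
          Function.update_self]
        congr 1
        exact Finset.prod_congr rfl fun i hi => by
          rw [Function.update_of_ne (Finset.ne_of_mem_erase hi)]
      have hprodf : ∏ i, f i x = f a x * ∏ i ∈ univ.erase a, f i x :=
        (Finset.mul_prod_erase univ (fun i => f i x) (mem_univ a)).symm
      have hprodg' : ∏ i, (deriv (g i) x) ^ (s' i)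
          = (deriv (g a) x) ^ (s a - 1) * ∏ i ∈ univ.erase a, (deriv (g i) x) ^ (s i) := by
        rw [← Finset.mul_prod_erase univ (fun i => (deriv (g i) x) ^ (s' i)) (mem_univ a),
          hs'def, Function.update_self]
        congr 1
        exact Finset.prod_congr rfl fun i hi => by
          rw [Function.update_of_ne (Finset.ne_of_mem_erase hi)]
      have hprodg : ∏ i, (deriv (g i) x) ^ (s i)
          = (deriv (g a) x) ^ (s a) * ∏ i ∈ univ.erase a, (deriv (g i) x) ^ (s i) :=
        (Finset.mul_prod_erase univ (fun i => (deriv (g i) x) ^ (s i)) (mem_univ a)).symm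
      have hpow : (deriv (g a) x) ^ (s a) = deriv (g a) x * (deriv (g a) x) ^ (s a - 1) := by
        obtain ⟨p, hp⟩ : ∃ p, s a = p + 1 := ⟨s a - 1, by omega⟩
        rw [hp]
        simp only [Nat.add_sub_cancel]
        exact _root_.pow_succ' _ _
      rw [hprodF2, hprodf, hprodg', hprodg, hpow, Nat.factorial_succ]
      push_cast
      ring
    · rw [if_neg hne, if_neg (by omega : ¬ m + 1 = n' + 1), mul_zero]

theorem stmt_0 (n r : ℕ) (hr : 1 ≤ r)
    (f g : Fin r → ℝ → ℝ)
    (hf : ∀ i, ContDiff ℝ (n : ℕ∞) (f i))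
    (hg : ∀ i, ContDiff ℝ (n : ℕ∞) (g i))
    (hsum : ∀ x : ℝ, ∑ i, g i x = 0)
    (s : Fin r → ℕ) (hs : ∑ i, s i = n) (x : ℝ) :
    ∑ k ∈ Finset.Nat.antidiagonalTuple r n,
      (Nat.multinomial Finset.univ k : ℝ) *
        ∏ i, iteratedDeriv (s i) (fun t => f i t * (g i t) ^ (k i)) x
      = (n.factorial : ℝ) * (∏ i, f i x) * ∏ i, (deriv (g i) x) ^ (s i) := by
  have := key n n le_rfl r f g hf hg hsum s hs x
  rwa [if_pos rfl] at this
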